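/- arXiv:2004.11708 — 3 statements merged into one kernel-verified Lean document; each statement's English description precedes it below -/
import Mathlib

section
/- Let X be a complex Banach space, A a bounded linear operator on X, and M a closed subspace of X invariant under A (i.e., A(M) ⊆ M). Let D be a connected component of the resolvent set ρ(A) of A. If D ∩ σ(A|_M) ≠ ∅, where A|_M denotes the restriction of A to M, then D ⊆ σ(A|_M). -/
set_option maxHeartbeats 1000000


/-- The restriction of a bounded linear operator `A` to a closed invariant
subspace `M`, as a bounded linear operator on `M`. -/
noncomputable def restrictToInvariant {X : Type*} [NormedAddCommGroup X] [NormedSpace ℂ X]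
    (A : X →L[ℂ] X) (M : Submodule ℂ X) (hinv : ∀ x ∈ M, A x ∈ M) :
    M →L[ℂ] M :=
  (A.comp M.subtypeL).codRestrict M (fun x => hinv x.1 x.2)

/-- The quotient map `X → X ⧸ M` as a continuous linear map. -/
noncomputable def mkQL {X : Type*} [NormedAddCommGroup X] [NormedSpace ℂ X]
    (M : Submodule ℂ X) : X →L[ℂ] X ⧸ M :=
  M.mkQ.mkContinuous 1 (fun x => by simpa using Submodule.Quotient.norm_mk_le M x)

/-- If `D` is a connected component of the resolvent set of `A` and `D` meets the
spectrum of the restriction `A|_M`, then `D` is contained in the spectrum of `A|_M`. -/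
theorem spectrum_restrict_component {X : Type*} [NormedAddCommGroup X] [NormedSpace ℂ X]
    [CompleteSpace X] (A : X →L[ℂ] X) (M : Submodule ℂ X) (hM : IsClosed (M : Set X))
    (hinv : ∀ x ∈ M, A x ∈ M) (D : Set ℂ)
    (hD : ∃ z ∈ resolventSet ℂ A, D = connectedComponentIn (resolventSet ℂ A) z)
    (hne : (D ∩ spectrum ℂ (restrictToInvariant A M hinv)).Nonempty) :
    D ⊆ spectrum ℂ (restrictToInvariant A M hinv) := by
  classical
  haveI : CompleteSpace M := hM.completeSpace_coe
  haveI : IsClosed ((M : Set X)) := hM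
  obtain ⟨z, hz, rfl⟩ := hD
  set T := restrictToInvariant A M hinv with hT
  set D := connectedComponentIn (resolventSet ℂ A) z with hDdef
  -- D is open and preconnected, inside resolventSet
  have hDsub : D ⊆ resolventSet ℂ A := connectedComponentIn_subset _ _
  have hDopen : IsOpen D :=
    (spectrum.isOpen_resolventSet A).connectedComponentIn
  have hDconn : IsPreconnected D := isPreconnected_connectedComponentIn
  -- the resolvent function
  set R : ℂ → (X →L[ℂ] X) := fun w => Ring.inverse (algebraMap ℂ (X →L[ℂ] X) w - A) with hR
  have hRunit : ∀ w ∈ resolventSet ℂ A, IsUnit (algebraMap ℂ (X →L[ℂ] X) w - A) := by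
    intro w hw
    exact spectrum.mem_resolventSet_iff.mp hw
  -- analyticity of the resolvent on D
  have hRanalytic : AnalyticOnNhd ℂ R D := by
    intro w hw
    have h1 : AnalyticAt ℂ (fun w : ℂ => algebraMap ℂ (X →L[ℂ] X) w - A) w := by
      simp only [Algebra.algebraMap_eq_smul_one]
      exact (analyticAt_id.smul analyticAt_const).sub analyticAt_const
    have h2 : AnalyticAt ℂ Ring.inverse (algebraMap ℂ (X →L[ℂ] X) w - A) := by
      have := analyticAt_inverse (𝕜 := ℂ) ((hRunit w (hDsub hw)).unit)
      rwa [IsUnit.unit_spec] at this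
    exact AnalyticAt.comp (f := fun w : ℂ => algebraMap ℂ (X →L[ℂ] X) w - A)
      (g := Ring.inverse) h2 h1
  by_contra hsub
  -- There exists μ ∈ D with μ in the resolvent set of T.
  obtain ⟨μ, hμD, hμρ⟩ : ∃ μ ∈ D, μ ∈ resolventSet ℂ T := by
    rw [Set.subset_def] at hsub
    push_neg at hsub
    obtain ⟨μ, hμD, hμ⟩ := hsub
    exact ⟨μ, hμD, spectrum.notMem_iff.mp hμ⟩
  -- On D ∩ resolventSet T, the resolvent of A maps M into M.
  have key : ∀ w ∈ D ∩ resolventSet ℂ T, ∀ x ∈ M, R w x ∈ M := by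
    rintro w ⟨hwD, hwT⟩ x hx
    have hwA := hRunit w (hDsub hwD)
    have hwTu : IsUnit (algebraMap ℂ (M →L[ℂ] M) w - T) := spectrum.mem_resolventSet_iff.mp hwT
    set S : M →L[ℂ] M := Ring.inverse (algebraMap ℂ (M →L[ℂ] M) w - T) with hS
    set y : M := S ⟨x, hx⟩ with hy
    have h1 : (algebraMap ℂ (M →L[ℂ] M) w - T) y = ⟨x, hx⟩ := by
      have := Ring.mul_inverse_cancel _ hwTu
      calc (algebraMap ℂ (M →L[ℂ] M) w - T) y
          = ((algebraMap ℂ (M →L[ℂ] M) w - T) * S) ⟨x, hx⟩ := rfl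
        _ = ⟨x, hx⟩ := by rw [this]; rfl
    -- as elements of X : (w • 1 - A) y = x
    have h2 : (algebraMap ℂ (X →L[ℂ] X) w - A) (y : X) = x := by
      have : (((algebraMap ℂ (M →L[ℂ] M) w - T) y : M) : X) = x := by rw [h1]
      simp [hT, restrictToInvariant, Algebra.algebraMap_eq_smul_one,
        ContinuousLinearMap.sub_apply, ContinuousLinearMap.smul_apply] at this
      exact this
    have h3 : R w x = (y : X) := by
      rw [← h2]
      calc R w ((algebraMap ℂ (X →L[ℂ] X) w - A) (y : X))
          = (R w * (algebraMap ℂ (X →L[ℂ] X) w - A)) (y : X) := rfl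
        _ = (y : X) := by rw [hR, Ring.inverse_mul_cancel _ hwA]; rfl
    rw [h3]; exact y.2
  -- By the identity theorem, the resolvent of A maps M into M for all w ∈ D.
  have key2 : ∀ w ∈ D, ∀ x ∈ M, R w x ∈ M := by
    intro w hwD x hx
    set f : ℂ → X ⧸ M := fun w => mkQL M (R w x) with hf
    have hfa : AnalyticOnNhd ℂ f D := by
      intro v hv
      have hL := (((mkQL M).comp (ContinuousLinearMap.apply ℂ X x)).analyticAt (R v)).comp
        (hRanalytic v hv)
      exact hL.congr (Filter.Eventually.of_forall fun u => by
        simp [hf, ContinuousLinearMap.comp_apply, ContinuousLinearMap.apply_apply])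
    have hUopen : IsOpen (resolventSet ℂ T) := by
      have h1 : IsOpen {u : M →L[ℂ] M | IsUnit u} := by
        have := Units.isOpen (R := M →L[ℂ] M)
        convert this using 2
      have h2 : Continuous fun w : ℂ => algebraMap ℂ (M →L[ℂ] M) w - T := by
        simp only [Algebra.algebraMap_eq_smul_one]
        exact (continuous_id.smul continuous_const).sub continuous_const
      exact h1.preimage h2
    have hU : IsOpen (D ∩ resolventSet ℂ T) := hDopen.inter hUopen
    have hfz : f =ᶠ[nhds μ] 0 := by
      apply Filter.eventuallyEq_of_mem (hU.mem_nhds ⟨hμD, hμρ⟩)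
      intro v hv
      have := key v hv x hx
      simpa [hf, mkQL, Submodule.Quotient.mk_eq_zero] using this
    have := hfa.eqOn_zero_of_preconnected_of_eventuallyEq_zero hDconn hμD hfz hwD
    have h0 : mkQL M (R w x) = 0 := this
    simpa [mkQL, Submodule.Quotient.mk_eq_zero] using h0
  -- Hence every w ∈ D is in the resolvent set of T, contradicting hne.
  obtain ⟨w, hwD, hwσ⟩ := hne
  apply spectrum.notMem_iff.mpr _ hwσ
  -- build the inverse of (w - T) on M
  have hwA := hRunit w (hDsub hwD)
  set B : M →L[ℂ] M := ((R w).comp M.subtypeL).codRestrict M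
    (fun x => key2 w hwD x.1 x.2) with hB
  have hcoe : ∀ (x : M), (((algebraMap ℂ (M →L[ℂ] M) w - T) x : M) : X)
      = (algebraMap ℂ (X →L[ℂ] X) w - A) (x : X) := by
    intro x
    simp [hT, restrictToInvariant, Algebra.algebraMap_eq_smul_one,
      ContinuousLinearMap.sub_apply, ContinuousLinearMap.smul_apply]
    rfl
  have hBcoe : ∀ (x : M), ((B x : M) : X) = R w (x : X) := fun x => rfl
  have h1 : (algebraMap ℂ (M →L[ℂ] M) w - T) * B = 1 := by
    ext x
    rw [ContinuousLinearMap.mul_apply, ContinuousLinearMap.one_apply, hcoe, hBcoe]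
    calc (algebraMap ℂ (X →L[ℂ] X) w - A) (R w (x : X))
        = ((algebraMap ℂ (X →L[ℂ] X) w - A) * R w) (x : X) := rfl
      _ = (x : X) := by rw [hR, Ring.mul_inverse_cancel _ hwA]; rfl
  have h2 : B * (algebraMap ℂ (M →L[ℂ] M) w - T) = 1 := by
    ext x
    rw [ContinuousLinearMap.mul_apply, ContinuousLinearMap.one_apply, hBcoe, hcoe]
    calc R w ((algebraMap ℂ (X →L[ℂ] X) w - A) (x : X))
        = (R w * (algebraMap ℂ (X →L[ℂ] X) w - A)) (x : X) := rfl
      _ = (x : X) := by rw [hR, Ring.inverse_mul_cancel _ hwA]; rfl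
  exact spectrum.mem_resolventSet_iff.mpr
    ⟨⟨algebraMap ℂ (M →L[ℂ] M) w - T, B, h1, h2⟩, rfl⟩
end

section
/- Let X be a complex Banach space, A a bounded linear operator on X, and M a closed subspace of X invariant under A. If U is the unbounded connected component of the resolvent set ρ(A), then σ(A|_M) ∩ U = ∅. -/
section aux

variable {X : Type*} [NormedAddCommGroup X] [NormedSpace ℂ X] [CompleteSpace X]
  (A : X →L[ℂ] X) (M : Submodule ℂ X)

@[simp] lemma restrictToInvariant_apply (hinv : ∀ x ∈ M, A x ∈ M) (m : M) :
    (restrictToInvariant A M hinv m : X) = A m := rfl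

/-- If the resolvent at `z` preserves `M`, then `z` is in the resolvent set of the
restriction. -/
lemma mem_resolventSet_restrict (hM : IsClosed (M : Set X)) (hinv : ∀ x ∈ M, A x ∈ M)
    {z : ℂ} (hz : z ∈ resolventSet ℂ A) (hpres : ∀ x ∈ M, resolvent A z x ∈ M) :
    z ∈ resolventSet ℂ (restrictToInvariant A M hinv) := by
  haveI : CompleteSpace M := hM.completeSpace_coe
  set B := restrictToInvariant A M hinv
  set C : M →L[ℂ] M :=
    ((resolvent A z).comp M.subtypeL).codRestrict M (fun x => hpres x.1 x.2) with hC
  rw [resolventSet, Set.mem_setOf_eq] at hz ⊢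
  have h1 : (algebraMap ℂ (X →L[ℂ] X) z - A) * resolvent A z = 1 :=
    Ring.mul_inverse_cancel _ hz
  have h2 : resolvent A z * (algebraMap ℂ (X →L[ℂ] X) z - A) = 1 :=
    Ring.inverse_mul_cancel _ hz
  refine ⟨⟨algebraMap ℂ (M →L[ℂ] M) z - B, C, ?_, ?_⟩, rfl⟩
  · ext m
    have := congrArg (fun T : X →L[ℂ] X => T (m : X)) h1
    simp only [Algebra.algebraMap_eq_smul_one, ContinuousLinearMap.mul_apply,
      ContinuousLinearMap.sub_apply, ContinuousLinearMap.smul_apply,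
      ContinuousLinearMap.one_apply] at this ⊢
    exact this
  · ext m
    have := congrArg (fun T : X →L[ℂ] X => T (m : X)) h2
    simp only [Algebra.algebraMap_eq_smul_one, ContinuousLinearMap.mul_apply,
      ContinuousLinearMap.sub_apply, ContinuousLinearMap.smul_apply,
      ContinuousLinearMap.one_apply] at this ⊢
    exact this

/-- Conversely, if `z` is in both resolvent sets, the resolvent of `A` preserves `M`. -/
lemma resolvent_mem_of_mem_resolventSet_restrict (hinv : ∀ x ∈ M, A x ∈ M) {z : ℂ}
    (hz : z ∈ resolventSet ℂ A)
    (hzB : z ∈ resolventSet ℂ (restrictToInvariant A M hinv)) :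
    ∀ x ∈ M, resolvent A z x ∈ M := by
  intro x hx
  set B := restrictToInvariant A M hinv
  set y : M := resolvent B z ⟨x, hx⟩ with hy
  have h1 : (algebraMap ℂ (M →L[ℂ] M) z - B) * resolvent B z = 1 :=
    Ring.mul_inverse_cancel _ hzB
  have h2 : resolvent A z * (algebraMap ℂ (X →L[ℂ] X) z - A) = 1 :=
    Ring.inverse_mul_cancel _ hz
  have key : (algebraMap ℂ (X →L[ℂ] X) z - A) (y : X) = x := by
    have := congrArg (fun T : M →L[ℂ] M => ((T ⟨x, hx⟩ : M) : X)) h1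
    simp only [Algebra.algebraMap_eq_smul_one, ContinuousLinearMap.mul_apply,
      ContinuousLinearMap.sub_apply, ContinuousLinearMap.smul_apply,
      ContinuousLinearMap.one_apply] at this ⊢
    simpa [B, hy] using this
  have : resolvent A z x = (y : X) := by
    have := congrArg (fun T : X →L[ℂ] X => T (y : X)) h2
    simp only [ContinuousLinearMap.mul_apply, ContinuousLinearMap.one_apply] at this
    rw [← key]
    exact this
  rw [this]
  exact y.2

end aux

set_option maxHeartbeats 1000000 in
/-- If `U` is the unbounded connected component of the resolvent set of `A`, then the
spectrum of the restriction `A|_M` does not meet `U`. -/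
theorem spectrum_restrict_unbounded_component {X : Type*} [NormedAddCommGroup X]
    [NormedSpace ℂ X] [CompleteSpace X] (A : X →L[ℂ] X) (M : Submodule ℂ X)
    (hM : IsClosed (M : Set X)) (hinv : ∀ x ∈ M, A x ∈ M) (U : Set ℂ)
    (hU : ∃ z ∈ resolventSet ℂ A, U = connectedComponentIn (resolventSet ℂ A) z)
    (hUnb : ¬ Bornology.IsBounded U) :
    spectrum ℂ (restrictToInvariant A M hinv) ∩ U = ∅ := by
  haveI : CompleteSpace M := hM.completeSpace_coe
  set B := restrictToInvariant A M hinv with hB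
  obtain ⟨z₀, hz₀, hUeq⟩ := hU
  subst hUeq
  set U := connectedComponentIn (resolventSet ℂ A) z₀ with hUdef
  have hUsub : U ⊆ resolventSet ℂ A := connectedComponentIn_subset _ _
  haveI : PreconnectedSpace ↥U :=
    Subtype.preconnectedSpace isPreconnected_connectedComponentIn
  set S : Set ↥U := Subtype.val ⁻¹' resolventSet ℂ B with hS
  have hopen : IsOpen S := IsOpen.preimage continuous_subtype_val (spectrum.isOpen_resolventSet (𝕜 := ℂ) (A := ↥M →L[ℂ] ↥M) B)
  have hSeq : S = ⋂ x : M, (fun w : ↥U => resolvent A (↑w : ℂ) (x : X)) ⁻¹' (M : Set X) := by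
    ext w
    simp only [hS, Set.mem_preimage, Set.mem_iInter]
    constructor
    · intro h x
      exact resolvent_mem_of_mem_resolventSet_restrict A M hinv (hUsub w.2) h x.1 x.2
    · intro h
      exact mem_resolventSet_restrict A M hM hinv (hUsub w.2) (fun x hx => h ⟨x, hx⟩)
  have hcont : Continuous (fun w : ↥U => resolvent A (↑w : ℂ)) := by
    rw [continuous_iff_continuousAt]
    intro w
    exact ((spectrum.hasDerivAt_resolvent (hUsub w.2)).continuousAt).comp
      continuousAt_subtype_val
  have hclosed : IsClosed S := by
    rw [hSeq]
    exact isClosed_iInter fun x =>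
      hM.preimage ((ContinuousLinearMap.apply ℂ X (x : X)).continuous.comp hcont)
  have hne : S.Nonempty := by
    rw [Metric.isBounded_iff_subset_closedBall 0] at hUnb
    push_neg at hUnb
    have h' := hUnb (‖B‖ * ‖(1 : M →L[ℂ] M)‖)
    rw [Set.not_subset] at h'
    obtain ⟨z, hzU, hz⟩ := h' 
    refine ⟨⟨z, hzU⟩, ?_⟩
    refine spectrum.mem_resolventSet_of_norm_lt_mul (𝕜 := ℂ) (A := ↥M →L[ℂ] ↥M)
      (a := B) (k := z) ?_
    rw [Metric.mem_closedBall, not_le, dist_zero_right] at hz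
    exact hz
  have : S = Set.univ := (isClopen_iff.mp ⟨hclosed, hopen⟩).resolve_left
    (Set.nonempty_iff_ne_empty.mp hne)
  ext z
  simp only [Set.mem_inter_iff, Set.mem_empty_iff_false, iff_false]
  rintro ⟨hzs, hzU⟩
  have : (⟨z, hzU⟩ : ↥U) ∈ S := this ▸ Set.mem_univ _
  exact (spectrum.notMem_iff.mpr this).elim hzs
end

section
/- Let X be a complex Banach space, A a bounded linear operator on X, and M a closed subspace of X invariant under A. Then σ(A|_M) is contained in the union of σ(A) and the bounded connected components of ℂ \ σ(A); that is, σ(A|_M) is contained in the polynomially convex hull of σ(A) (the complement of the unbounded component of ℂ \ σ(A)). -/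
set_option maxHeartbeats 1000000

open Ring Set


section aux

variable {X : Type*} [NormedAddCommGroup X] [NormedSpace ℂ X]

/-- A closed submodule contains sums of its elements. -/
lemma Submodule.mem_of_hasSum {M : Submodule ℂ X} (hM : IsClosed (M : Set X))
    {f : ℕ → X} {s : X} (h : HasSum f s) (hm : ∀ n, f n ∈ M) : s ∈ M :=
  hM.mem_of_tendsto h (Filter.Eventually.of_forall fun t => sum_mem fun n _ => hm n)

lemma pow_mem_invariant {A : X →L[ℂ] X} {M : Submodule ℂ X}
    (hinv : ∀ x ∈ M, A x ∈ M) : ∀ n, ∀ x ∈ M, (A ^ n) x ∈ M := by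
  intro n
  induction n with
  | zero => intro x hx; simpa using hx
  | succ n ih =>
    intro x hx
    rw [pow_succ, ContinuousLinearMap.mul_apply]
    exact ih _ (hinv x hx)

lemma eq_ring_inverse {R : Type*} [Ring R] {a c : R} (h : IsUnit a) (hc : a * c = 1) :
    Ring.inverse a = c := by
  calc Ring.inverse a = Ring.inverse a * (a * c) := by rw [hc, mul_one]
  _ = (Ring.inverse a * a) * c := by rw [mul_assoc]
  _ = c := by rw [Ring.inverse_mul_cancel a h, one_mul]

end aux


/-- The spectrum of the restriction `A|_M` is contained in the polynomially convex hull of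
the spectrum of `A`: every point of `σ(A|_M)` lies either in `σ(A)` or in a bounded
connected component (a hole) of `ℂ \ σ(A)`. -/
theorem spectrum_restrict_subset_polyHull {X : Type*} [NormedAddCommGroup X]
    [NormedSpace ℂ X] [CompleteSpace X] (A : X →L[ℂ] X) (M : Submodule ℂ X)
    (hM : IsClosed (M : Set X)) (hinv : ∀ x ∈ M, A x ∈ M) :
    ∀ z ∈ spectrum ℂ (restrictToInvariant A M hinv),
      z ∈ spectrum ℂ A ∨
        Bornology.IsBounded (connectedComponentIn (spectrum ℂ A)ᶜ z) := by
  intro z hz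
  by_contra hcon
  push_neg at hcon
  obtain ⟨hz1, hz2⟩ := hcon
  rcases subsingleton_or_nontrivial X with hX | hX
  · -- trivial space: spectrum of restriction is empty
    have : Subsingleton (M →L[ℂ] M) := by
      have : Subsingleton M := ⟨fun a b => Subtype.ext (Subsingleton.elim _ _)⟩
      infer_instance
    exact (spectrum.notMem_iff.mpr (isUnit_of_subsingleton _)) hz
  set u : ℂ → (X →L[ℂ] X) := fun w => algebraMap ℂ (X →L[ℂ] X) w - A with hu
  -- the set of resolvent points whose resolvent preserves M
  set P : Set ℂ := {w | w ∈ resolventSet ℂ A ∧ ∀ x ∈ M, Ring.inverse (u w) x ∈ M} with hP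
  -- P is open
  have hPopen : IsOpen P := by
    rw [Metric.isOpen_iff]
    rintro w₀ ⟨hw₀, hw₀M⟩
    set R₀ : (X →L[ℂ] X) := Ring.inverse (u w₀) with hR₀
    have hunit₀ : IsUnit (u w₀) := hw₀
    refine ⟨(‖R₀‖ + 1)⁻¹, by positivity, fun w hw => ?_⟩
    rw [Metric.mem_ball, dist_eq_norm] at hw
    set t : (X →L[ℂ] X) := (w₀ - w) • R₀ with ht
    have htn : ‖t‖ < 1 := by
      have : ‖t‖ ≤ ‖w - w₀‖ * ‖R₀‖ := by
        have h0 : ‖t‖ ≤ ‖w₀ - w‖ * ‖R₀‖ := ContinuousLinearMap.opNorm_smul_le _ _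
        rwa [norm_sub_rev] at h0
      have h1 : ‖w - w₀‖ * ‖R₀‖ < (‖R₀‖ + 1)⁻¹ * (‖R₀‖ + 1) := by
        apply mul_lt_mul' (le_of_lt hw) (by linarith [norm_nonneg R₀]) (norm_nonneg R₀)
          (by positivity)
      rw [inv_mul_cancel₀ (by positivity)] at h1
      linarith
    have key : u w = (1 - t) * u w₀ := by
      rw [ht, sub_mul, one_mul, smul_mul_assoc, Ring.inverse_mul_cancel _ hunit₀]
      simp only [hu, Algebra.algebraMap_eq_smul_one, smul_sub, sub_smul]
      abel
    have hunitw : IsUnit (u w) := by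
      rw [key]
      exact (isUnit_one_sub_of_norm_lt_one htn).mul hunit₀
    have hSinv : Ring.inverse (u w) = R₀ * Ring.inverse (1 - t) := by
      apply eq_ring_inverse hunitw
      rw [key, mul_assoc, ← mul_assoc (u w₀), Ring.mul_inverse_cancel _ hunit₀, one_mul,
        Ring.mul_inverse_cancel _ (isUnit_one_sub_of_norm_lt_one htn)]
    refine ⟨hunitw, fun x hx => ?_⟩
    rw [hSinv, ContinuousLinearMap.mul_apply]
    have hR₀pres : ∀ y ∈ M, R₀ y ∈ M := fun y hy => hw₀M y hy
    apply hR₀pres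
    -- (Ring.inverse (1 - t)) x ∈ M via geometric series
    have hsum : HasSum (fun i : ℕ => t ^ i) (Ring.inverse (1 - t)) :=
      hasSum_geom_series_inverse t htn
    have hsumx : HasSum (fun i : ℕ => (t ^ i) x) (Ring.inverse (1 - t) x) :=
      (ContinuousLinearMap.apply ℂ X x).hasSum hsum
    refine Submodule.mem_of_hasSum hM hsumx fun n => ?_
    rw [ht, smul_pow]
    exact Submodule.smul_mem _ _ (pow_mem_invariant hR₀pres n x hx)
  -- the complement of P within the resolvent set is open
  have hQopen : IsOpen (resolventSet ℂ A \ P) := by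
    rw [isOpen_iff_mem_nhds]
    rintro w₀ ⟨hw₀, hw₀P⟩
    have : ¬ ∀ x ∈ M, Ring.inverse (u w₀) x ∈ M := fun h => hw₀P ⟨hw₀, h⟩
    push_neg at this
    obtain ⟨x, hxM, hxout⟩ := this
    have hcont : ContinuousAt (fun w => Ring.inverse (u w) x) w₀ := by
      have h1 : Continuous u := by
        simp only [hu]
        exact ((algebraMapCLM ℂ (X →L[ℂ] X)).continuous).sub continuous_const
      have h2 : ContinuousAt (fun w => Ring.inverse (u w)) w₀ := by
        have h3 : ContinuousAt Ring.inverse (u w₀) := by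
          have hU : IsUnit (u w₀) := hw₀
          have h4 := NormedRing.inverse_continuousAt hU.unit
          rwa [IsUnit.unit_spec] at h4
        exact ContinuousAt.comp (g := Ring.inverse) h3 h1.continuousAt
      exact (ContinuousLinearMap.apply ℂ X x).continuous.continuousAt.comp h2
    have hev1 : ∀ᶠ w in nhds w₀, Ring.inverse (u w) x ∈ (M : Set X)ᶜ :=
      hcont.eventually_mem (hM.isOpen_compl.mem_nhds hxout)
    have hev2 : ∀ᶠ w in nhds w₀, w ∈ resolventSet ℂ A :=
      (spectrum.isOpen_resolventSet A).mem_nhds hw₀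
    filter_upwards [hev1, hev2] with w h1 h2
    exact ⟨h2, fun hP' => h1 (hP'.2 x hxM)⟩
  -- points of large norm are in P
  have hbig : ∀ w : ℂ, ‖A‖ < ‖w‖ → w ∈ P := by
    intro w hw
    have hw0 : w ≠ 0 := by
      intro h; rw [h, norm_zero] at hw; exact absurd hw (not_lt.mpr (norm_nonneg A))
    have hρ : w ∈ resolventSet ℂ A := spectrum.mem_resolventSet_of_norm_lt hw
    set t : (X →L[ℂ] X) := w⁻¹ • A with ht
    have htn : ‖t‖ < 1 := by
      have h0 : ‖t‖ ≤ ‖w⁻¹‖ * ‖A‖ := ContinuousLinearMap.opNorm_smul_le _ _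
      have h1 : ‖w⁻¹‖ * ‖A‖ < 1 := by
        rw [norm_inv, inv_mul_lt_one₀ (norm_pos_iff.mpr hw0)]
        exact hw
      linarith
    have key : u w = w • ((1 : X →L[ℂ] X) - t) := by
      rw [ht, smul_sub, smul_smul, mul_inv_cancel₀ hw0, one_smul]
      simp only [hu, Algebra.algebraMap_eq_smul_one]
    have hρu : IsUnit (u w) := hρ
    have hSinv : Ring.inverse (u w) = w⁻¹ • Ring.inverse (1 - t) := by
      apply eq_ring_inverse hρu
      rw [key, smul_mul_assoc, mul_smul_comm, smul_smul, mul_inv_cancel₀ hw0, one_smul,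
        Ring.mul_inverse_cancel _ (isUnit_one_sub_of_norm_lt_one htn)]
    refine ⟨hρ, fun x hx => ?_⟩
    rw [hSinv, ContinuousLinearMap.smul_apply]
    refine Submodule.smul_mem _ _ ?_
    have hsum : HasSum (fun i : ℕ => t ^ i) (Ring.inverse (1 - t)) :=
      hasSum_geom_series_inverse t htn
    have hsumx : HasSum (fun i : ℕ => (t ^ i) x) (Ring.inverse (1 - t) x) :=
      (ContinuousLinearMap.apply ℂ X x).hasSum hsum
    refine Submodule.mem_of_hasSum hM hsumx fun n => ?_
    rw [ht, smul_pow]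
    exact Submodule.smul_mem _ _ (pow_mem_invariant hinv n x hx)
  -- the connected component of z is contained in P
  have hρcompl : (spectrum ℂ A)ᶜ = resolventSet ℂ A := by
    rw [spectrum, compl_compl]
  have hzρ : z ∈ (spectrum ℂ A)ᶜ := hz1
  set C := connectedComponentIn (spectrum ℂ A)ᶜ z with hC
  have hCsub : C ⊆ resolventSet ℂ A := hρcompl ▸ connectedComponentIn_subset _ _
  obtain ⟨w, hwC, hwnorm⟩ : ∃ w ∈ C, ‖A‖ < ‖w‖ := by
    by_contra h
    push_neg at h
    exact hz2 (isBounded_iff_forall_norm_le.mpr ⟨‖A‖, h⟩)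
  have hCP : C ⊆ P := by
    apply IsPreconnected.subset_left_of_subset_union hPopen hQopen
      (disjoint_left.mpr fun a ha ha' => ha'.2 ha)
      (fun a ha => by
        by_cases h : a ∈ P
        · exact Or.inl h
        · exact Or.inr ⟨hCsub ha, h⟩)
      ⟨w, hwC, hbig w hwnorm⟩
      (isPreconnected_connectedComponentIn)
  have hzP : z ∈ P := hCP (mem_connectedComponentIn hzρ)
  -- now build the inverse of the restriction and contradict hz
  obtain ⟨hzρ', hzM⟩ := hzP
  set R : (X →L[ℂ] X) := Ring.inverse (u z) with hR
  set R' : M →L[ℂ] M := restrictToInvariant R M hzM with hR'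
  set A' : M →L[ℂ] M := restrictToInvariant A M hinv with hA'
  have hcoeA : ∀ v : M, ((A' v : X)) = A v := fun v => rfl
  have hcoeR : ∀ v : M, ((R' v : X)) = R v := fun v => rfl
  have h1 : (algebraMap ℂ (M →L[ℂ] M) z - A') * R' = 1 := by
    ext v
    have := congrArg (fun (T : X →L[ℂ] X) => T (v : X)) (Ring.mul_inverse_cancel (u z) hzρ')
    simpa [hu, ContinuousLinearMap.mul_apply, ContinuousLinearMap.sub_apply,
      Algebra.algebraMap_eq_smul_one, hcoeA, hcoeR, hR] using this
  have h2 : R' * (algebraMap ℂ (M →L[ℂ] M) z - A') = 1 := by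
    ext v
    have := congrArg (fun (T : X →L[ℂ] X) => T (v : X)) (Ring.inverse_mul_cancel (u z) hzρ')
    simpa [hu, ContinuousLinearMap.mul_apply, ContinuousLinearMap.sub_apply,
      Algebra.algebraMap_eq_smul_one, hcoeA, hcoeR, hR, map_smul, map_sub] using this
  have : IsUnit (algebraMap ℂ (M →L[ℂ] M) z - A') :=
    ⟨⟨_, R', h1, h2⟩, rfl⟩
  exact spectrum.notMem_iff.mpr this hz
end
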